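/- Suppose p(θ,t) = a(t)·(sin 2θ)/2 - b(t)·(cos 2θ)/2 + c(t) with a, b, c differentiable, and p satisfies p_t = p·p_θθ - (1/2)p_θ² + 2p² for all θ and t. Then a'(t) = b'(t) = 0 and c'(t) = 2c(t)² - (a² + b²)/2. -/

import Mathlib

open Real

/-- Substituting the ansatz `p = a(t) sin 2θ / 2 - b(t) cos 2θ / 2 + c(t)` into the pressure
equation forces `a' = b' = 0` and `c' = 2c² - (a² + b²)/2`. -/
theorem ansatz_reduction (a b c : ℝ → ℝ)
    (ha : Differentiable ℝ a) (hb : Differentiable ℝ b) (hc : Differentiable ℝ c)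
    (heq : ∀ θ t : ℝ,
      deriv (fun s : ℝ =>
          a s * Real.sin (2 * θ) / 2 - b s * Real.cos (2 * θ) / 2 + c s) t
        = (a t * Real.sin (2 * θ) / 2 - b t * Real.cos (2 * θ) / 2 + c t) *
            deriv (deriv (fun x : ℝ =>
              a t * Real.sin (2 * x) / 2 - b t * Real.cos (2 * x) / 2 + c t)) θ
          - (1 / 2) * (deriv (fun x : ℝ =>
              a t * Real.sin (2 * x) / 2 - b t * Real.cos (2 * x) / 2 + c t) θ) ^ 2
          + 2 * (a t * Real.sin (2 * θ) / 2 - b t * Real.cos (2 * θ) / 2 + c t) ^ 2) :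
    ∀ t : ℝ, deriv a t = 0 ∧ deriv b t = 0 ∧
      deriv c t = 2 * (c t) ^ 2 - ((a t) ^ 2 + (b t) ^ 2) / 2 := by
  intro t
  -- derivative of sin(2x), cos(2x)
  have hsin : ∀ x : ℝ, HasDerivAt (fun y : ℝ => Real.sin (2 * y)) (2 * Real.cos (2 * x)) x := by
    intro x
    have h : HasDerivAt (fun y : ℝ => Real.sin (2 * y)) (Real.cos (2 * x) * (2 * 1)) x := by
      simpa [Function.comp_def] using
        (Real.hasDerivAt_sin (2 * x)).comp x ((hasDerivAt_id x).const_mul 2)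
    simpa [mul_comm] using h
  have hcos : ∀ x : ℝ, HasDerivAt (fun y : ℝ => Real.cos (2 * y)) (-(2 * Real.sin (2 * x))) x := by
    intro x
    have h : HasDerivAt (fun y : ℝ => Real.cos (2 * y)) (-Real.sin (2 * x) * (2 * 1)) x := by
      simpa [Function.comp_def] using
        (Real.hasDerivAt_cos (2 * x)).comp x ((hasDerivAt_id x).const_mul 2)
    have h2 : -Real.sin (2 * x) * (2 * 1) = -(2 * Real.sin (2 * x)) := by ring
    rwa [h2] at h
  -- first spatial derivative
  have hf1 : deriv (fun x : ℝ => a t * Real.sin (2 * x) / 2 - b t * Real.cos (2 * x) / 2 + c t)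
      = fun x => a t * Real.cos (2 * x) + b t * Real.sin (2 * x) := by
    funext x
    have h1 := ((((hsin x).const_mul (a t)).div_const 2).sub
      (((hcos x).const_mul (b t)).div_const 2)).add_const (c t)
    refine h1.deriv.trans ?_; ring
  -- second spatial derivative
  have hf2 : ∀ θ : ℝ, deriv (deriv (fun x : ℝ =>
      a t * Real.sin (2 * x) / 2 - b t * Real.cos (2 * x) / 2 + c t)) θ
      = -2 * a t * Real.sin (2 * θ) + 2 * b t * Real.cos (2 * θ) := by
    intro θ
    rw [hf1]
    have h1 := (((hcos θ).const_mul (a t))).add (((hsin θ).const_mul (b t)))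
    refine h1.deriv.trans ?_; ring
  -- time derivative
  have hL : ∀ θ : ℝ, deriv (fun s : ℝ =>
      a s * Real.sin (2 * θ) / 2 - b s * Real.cos (2 * θ) / 2 + c s) t
      = deriv a t * Real.sin (2 * θ) / 2 - deriv b t * Real.cos (2 * θ) / 2 + deriv c t := by
    intro θ
    have h1 := ((((ha t).hasDerivAt.mul_const (Real.sin (2 * θ))).div_const 2).sub
      (((hb t).hasDerivAt.mul_const (Real.cos (2 * θ))).div_const 2)).add (hc t).hasDerivAt
    exact h1.deriv
  -- the cleaned equation
  have key : ∀ θ : ℝ,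
      deriv a t * Real.sin (2 * θ) / 2 - deriv b t * Real.cos (2 * θ) / 2 + deriv c t
      = (a t * Real.sin (2 * θ) / 2 - b t * Real.cos (2 * θ) / 2 + c t) *
          (-2 * a t * Real.sin (2 * θ) + 2 * b t * Real.cos (2 * θ))
        - (1 / 2) * (a t * Real.cos (2 * θ) + b t * Real.sin (2 * θ)) ^ 2
        + 2 * (a t * Real.sin (2 * θ) / 2 - b t * Real.cos (2 * θ) / 2 + c t) ^ 2 := by
    intro θ
    have h := heq θ t
    rw [hL θ, hf2 θ, hf1] at h
    exact h
  have e1 := key (Real.pi / 4)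
  have e2 := key (-(Real.pi / 4))
  have e3 := key 0
  have hs1 : Real.sin (2 * (Real.pi / 4)) = 1 := by
    rw [show (2 : ℝ) * (Real.pi / 4) = Real.pi / 2 by ring, Real.sin_pi_div_two]
  have hc1 : Real.cos (2 * (Real.pi / 4)) = 0 := by
    rw [show (2 : ℝ) * (Real.pi / 4) = Real.pi / 2 by ring, Real.cos_pi_div_two]
  have hs2 : Real.sin (2 * (-(Real.pi / 4))) = -1 := by
    rw [show (2 : ℝ) * (-(Real.pi / 4)) = -(Real.pi / 2) by ring, Real.sin_neg,
      Real.sin_pi_div_two]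
  have hc2 : Real.cos (2 * (-(Real.pi / 4))) = 0 := by
    rw [show (2 : ℝ) * (-(Real.pi / 4)) = -(Real.pi / 2) by ring, Real.cos_neg,
      Real.cos_pi_div_two]
  rw [hs1, hc1] at e1
  rw [hs2, hc2] at e2
  simp only [mul_zero, Real.sin_zero, Real.cos_zero] at e3
  ring_nf at e1 e2 e3
  have hA : deriv a t = 0 := by linarith
  have hC : deriv c t = 2 * (c t) ^ 2 - ((a t) ^ 2 + (b t) ^ 2) / 2 := by linarith
  have hB : deriv b t = 0 := by linarith
  exact ⟨hA, hB, hC⟩
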